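/- With U a finite set, S a finite family of subsets covering U, and OPT the optimum cover size, after the greedy algorithm has made t selections, the number of still-uncovered elements is at most |U| · (1 − 1/OPT)^t. Consequently the greedy algorithm makes at most ⌈OPT · ln |U|⌉ + OPT selections. -/

import Mathlib

/-- The union of a list of finite sets. -/
def unionList {α : Type*} [DecidableEq α] (l : List (Finset α)) : Finset α :=
  l.foldr (· ∪ ·) ∅

theorem unionList_concat {α : Type*} [DecidableEq α] (l : List (Finset α)) (a : Finset α) :
    unionList (l ++ [a]) = unionList l ∪ a := by
  induction l with
  | nil => simp [unionList]
  | cons b l ih => simp [unionList] at ih ⊢; rw [ih]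

/-- Greedy set cover, decay of the uncovered set: if `OPT` is the optimum cover size,
then after `t` greedy selections the number of still-uncovered elements is at most
`|U| · (1 − 1/OPT)^t`; consequently the greedy algorithm makes at most
`⌈OPT · ln |U|⌉ + OPT` selections. -/
theorem greedy_uncovered_decay {α : Type*} [DecidableEq α]
    (U : Finset α) (S : Finset (Finset α)) (OPT : ℕ)
    (hOPT : IsLeast {k | ∃ T ⊆ S, U ⊆ T.biUnion id ∧ T.card = k} OPT) :
    ∀ gs : List (Finset α),
      (∀ k, (h : k < gs.length) →
        gs[k]'h ∈ S ∧
        (U \ unionList (gs.take k)).Nonempty ∧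
        ∀ s ∈ S, ((U \ unionList (gs.take k)) ∩ s).card ≤
          ((U \ unionList (gs.take k)) ∩ gs[k]'h).card) →
      ((∀ t ≤ gs.length, ((U \ unionList (gs.take t)).card : ℝ) ≤
          (U.card : ℝ) * (1 - 1 / (OPT : ℝ)) ^ t) ∧
        gs.length ≤ ⌈(OPT : ℝ) * Real.log U.card⌉₊ + OPT) := by
  obtain ⟨⟨T, hTS, hTcov, hTcard⟩, _hmin⟩ := hOPT
  intro gs hgs
  -- If any greedy step exists, OPT ≥ 1
  have hpos : ∀ k, k < gs.length → 1 ≤ OPT := by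
    intro k hk
    by_contra h0
    have hO0 : OPT = 0 := by omega
    rw [hO0, Finset.card_eq_zero] at hTcard
    subst hTcard
    simp only [Finset.biUnion_empty, Finset.subset_empty] at hTcov
    obtain ⟨x, hx⟩ := (hgs k hk).2.1
    have := (Finset.mem_sdiff.mp hx).1
    rw [hTcov] at this
    exact absurd this (Finset.notMem_empty x)
  -- single greedy step
  have key : ∀ k (h : k < gs.length),
      ((U \ unionList (gs.take (k+1))).card : ℝ) ≤
        ((U \ unionList (gs.take k)).card : ℝ) * (1 - 1/(OPT:ℝ)) := by
    intro k h
    obtain ⟨hmem, hne, hmax⟩ := hgs k h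
    set R := U \ unionList (gs.take k) with hR
    set g := gs[k]'h with hg
    have hOpos : 0 < OPT := hpos k h
    have hRsub : R ⊆ T.biUnion (fun s => R ∩ s) := by
      intro x hx
      have hxU : x ∈ U := (Finset.mem_sdiff.mp hx).1
      obtain ⟨s, hs, hxs⟩ := Finset.mem_biUnion.mp (hTcov hxU)
      exact Finset.mem_biUnion.mpr ⟨s, hs, Finset.mem_inter.mpr ⟨hx, hxs⟩⟩
    have h3 : R.card ≤ OPT * (R ∩ g).card := by
      calc R.card ≤ (T.biUnion (fun s => R ∩ s)).card := Finset.card_le_card hRsub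
        _ ≤ ∑ s ∈ T, (R ∩ s).card := Finset.card_biUnion_le
        _ ≤ ∑ _s ∈ T, (R ∩ g).card := Finset.sum_le_sum (fun s hs => hmax s (hTS hs))
        _ = OPT * (R ∩ g).card := by rw [Finset.sum_const, hTcard, smul_eq_mul]
    have htake : gs.take (k+1) = gs.take k ++ [g] := by
      rw [List.take_succ, List.getElem?_eq_getElem h]
      rfl
    have hU' : U \ unionList (gs.take (k+1)) = R \ g := by
      rw [htake, unionList_concat]
      ext y
      simp only [Finset.mem_sdiff, Finset.mem_union, hR]
      tauto
    have hcard : (R \ g).card = R.card - (R ∩ g).card := by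
      rw [← Finset.sdiff_inter_self_left R g,
        Finset.card_sdiff_of_subset (Finset.inter_subset_left)]
    have hle : (R ∩ g).card ≤ R.card := Finset.card_le_card Finset.inter_subset_left
    rw [hU', hcard]
    have hOr : (0:ℝ) < OPT := by exact_mod_cast hOpos
    have h3' : (R.card : ℝ) ≤ OPT * (R ∩ g).card := by exact_mod_cast h3
    have hcast : ((R.card - (R ∩ g).card : ℕ) : ℝ) = (R.card : ℝ) - (R ∩ g).card :=
      Nat.cast_sub hle
    rw [hcast]
    have hdiv : (R.card : ℝ) / OPT ≤ (R ∩ g).card := by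
      rw [div_le_iff₀ hOr]
      nlinarith
    have : (R.card : ℝ) * (1 - 1/(OPT:ℝ)) = (R.card : ℝ) - (R.card : ℝ)/OPT := by
      field_simp
    rw [this]
    linarith
  -- decay
  have decay : ∀ t ≤ gs.length, ((U \ unionList (gs.take t)).card : ℝ) ≤
      (U.card : ℝ) * (1 - 1 / (OPT : ℝ)) ^ t := by
    intro t
    induction t with
    | zero => intro _; simp [unionList]
    | succ t ih =>
      intro ht
      have ht' : t < gs.length := ht
      have h1 := ih (le_of_lt ht')
      have h2 := key t ht'
      have hOpos : 0 < OPT := hpos t ht'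
      have hr : (0:ℝ) ≤ 1 - 1/(OPT:ℝ) := by
        have h1' : (1:ℝ) ≤ OPT := by exact_mod_cast hOpos
        have : 1/(OPT:ℝ) ≤ 1 := by
          rw [div_le_one (by linarith)]; exact h1'
        linarith
      calc ((U \ unionList (gs.take (t+1))).card : ℝ)
          ≤ ((U \ unionList (gs.take t)).card : ℝ) * (1 - 1/(OPT:ℝ)) := h2
        _ ≤ ((U.card : ℝ) * (1 - 1 / (OPT : ℝ)) ^ t) * (1 - 1/(OPT:ℝ)) :=
            mul_le_mul_of_nonneg_right h1 hr
        _ = (U.card : ℝ) * (1 - 1 / (OPT : ℝ)) ^ (t+1) := by ring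
  refine ⟨decay, ?_⟩
  -- length bound
  rcases Nat.eq_zero_or_pos gs.length with hL0 | hL0
  · simp [hL0]
  set L := gs.length with hLdef
  have hkL : L - 1 < L := by omega
  have hO : 1 ≤ OPT := hpos (L-1) hkL
  have hne := (hgs (L-1) hkL).2.1
  have h1 : (1:ℝ) ≤ ((U \ unionList (gs.take (L-1))).card : ℝ) := by
    exact_mod_cast Finset.card_pos.mpr hne
  have hdec := decay (L-1) (by omega)
  have h1n := h1.trans hdec
  obtain ⟨x, hx⟩ := hne
  have hUpos : 0 < U.card := Finset.card_pos.mpr ⟨x, (Finset.mem_sdiff.mp hx).1⟩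
  rcases eq_or_lt_of_le hO with hO1 | hO2
  · -- OPT = 1
    by_cases hL1 : L - 1 = 0
    · omega
    · exfalso
      rw [← hO1] at h1n
      simp only [Nat.cast_one, div_one, sub_self] at h1n
      rw [zero_pow hL1] at h1n
      simp at h1n
      linarith
  · -- OPT ≥ 2
    have hO2' : (1:ℝ) < OPT := by exact_mod_cast hO2
    have hOr : (0:ℝ) < 1 - 1/(OPT:ℝ) := by
      rw [sub_pos, div_lt_one (by linarith)]
      exact hO2'
    have hlog : Real.log (1 - 1/(OPT:ℝ)) ≤ -(1/(OPT:ℝ)) := by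
      have := Real.log_le_sub_one_of_pos hOr
      linarith
    have h2 : (0:ℝ) ≤ Real.log ((U.card : ℝ) * (1 - 1/(OPT:ℝ)) ^ (L-1)) :=
      Real.log_nonneg h1n
    rw [Real.log_mul (by positivity) (by positivity), Real.log_pow] at h2
    have hcastk : (0:ℝ) ≤ ((L-1 : ℕ) : ℝ) := Nat.cast_nonneg _
    have h3 : ((L-1 : ℕ):ℝ) * (1/(OPT:ℝ)) ≤ Real.log U.card := by
      nlinarith [mul_le_mul_of_nonneg_left hlog hcastk]
    have h4 : ((L-1:ℕ):ℝ) ≤ (OPT:ℝ) * Real.log U.card := by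
      have hOp : (0:ℝ) < OPT := by linarith
      rw [mul_one_div, div_le_iff₀ hOp] at h3
      nlinarith
    have h5 : L - 1 ≤ ⌈(OPT:ℝ) * Real.log U.card⌉₊ := by
      calc L - 1 = ⌈((L-1:ℕ):ℝ)⌉₊ := (Nat.ceil_natCast _).symm
        _ ≤ _ := Nat.ceil_mono h4
    omega
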